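/- arXiv:1409.0140 — 2 statements merged into one kernel-verified Lean document; each statement's English description precedes it below -/
import Mathlib

section
/- Brezis–Lieb lemma for variable exponents: if (η_n) ⊂ L^{h(x)}(R^N, R^m) satisfies η_n(x) → η(x) a.e. in R^N and sup_n ||η_n||_{L^{h(x)}} < ∞, then η ∈ L^{h(x)}(R^N, R^m) and ∫ ( |η_n|^{h(x)} − |η_n − η|^{h(x)} − |η|^{h(x)} ) dx → 0 as n → ∞. -/
open MeasureTheory Filter Topology

set_option maxHeartbeats 2000000

noncomputable section

/-- Euclidean space `ℝ^N`. -/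
abbrev RN (N : ℕ) : Type := EuclideanSpace ℝ (Fin N)

/-- Euclidean space `ℝ^m` (target of vector-valued functions). -/
abbrev Rm (m : ℕ) : Type := EuclideanSpace ℝ (Fin m)

/-- The Luxemburg norm on the vector-valued space `L^{h(x)}(ℝ^N, ℝ^m)`. -/
def luxNormV {N m : ℕ} (h : RN N → ℝ) (u : RN N → Rm m) : ℝ :=
  sInf {t : ℝ | 0 < t ∧ (∫ x, (‖u x‖ / t) ^ h x) ≤ 1}

private lemma BL_claim1 {p P u v δ : ℝ} (hp1 : 1 ≤ p) (hpP : p ≤ P) (hu : 0 ≤ u) (hv : 0 ≤ v)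
    (hδ : 0 < δ) : (u + v) ^ p ≤ (1+δ)^P * u^p + (1+1/δ)^P * v^p := by
  have h1δ : (1:ℝ) ≤ 1 + δ := by linarith
  have hδ' : (0:ℝ) < 1/δ := by positivity
  have h1δ' : (1:ℝ) ≤ 1 + 1/δ := by linarith
  rcases le_or_gt v (δ * u) with hc | hc
  · have h1 : u + v ≤ (1+δ) * u := by nlinarith
    have hvp : 0 ≤ (1+1/δ)^P * v^p := by positivity
    calc (u+v)^p ≤ ((1+δ)*u)^p := Real.rpow_le_rpow (by positivity) h1 (by linarith)
      _ = (1+δ)^p * u^p := Real.mul_rpow (by linarith) hu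
      _ ≤ (1+δ)^P * u^p := by
          have h2 := Real.rpow_le_rpow_of_exponent_le h1δ hpP
          have hup : 0 ≤ u^p := Real.rpow_nonneg hu p
          nlinarith
      _ ≤ _ := by linarith
  · have hu' : u ≤ v / δ := by
      rw [le_div_iff₀ hδ]; nlinarith
    have h1 : u + v ≤ (1+1/δ) * v := by
      have : (1+1/δ) * v = v + v/δ := by field_simp
      rw [this]; linarith
    have hup : 0 ≤ (1+δ)^P * u^p := by positivity
    calc (u+v)^p ≤ ((1+1/δ)*v)^p := Real.rpow_le_rpow (by positivity) h1 (by linarith)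
      _ = (1+1/δ)^p * v^p := Real.mul_rpow (by linarith) hv
      _ ≤ (1+1/δ)^P * v^p := by
          have h2 := Real.rpow_le_rpow_of_exponent_le h1δ' hpP
          have hvp : 0 ≤ v^p := Real.rpow_nonneg hv p
          nlinarith
      _ ≤ _ := by linarith

private lemma BL_key2 {p P δ x y d : ℝ} (hp1 : 1 ≤ p) (hpP : p ≤ P) (hδ : 0 < δ)
    (hx : 0 ≤ x) (hy : 0 ≤ y) (hd : 0 ≤ d) (hxyd : x ≤ y + d) (hyxd : y ≤ x + d) :
    |x^p - y^p| ≤ (((1+δ)^P - 1) * (1+δ)^P) * y^p + ((1+δ)^P * (1+1/δ)^P) * d^p := by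
  have h1δ : (1:ℝ) ≤ 1 + δ := by linarith
  have hA : (1:ℝ) ≤ (1+δ)^P := by
    have := Real.rpow_le_rpow_of_exponent_le h1δ (le_trans zero_le_one (le_trans hp1 hpP) : (0:ℝ) ≤ P)
    simpa [Real.rpow_zero] using this
  have hK : (0:ℝ) ≤ (1+1/δ)^P := by positivity
  have hxp : 0 ≤ x^p := Real.rpow_nonneg hx p
  have hyp : 0 ≤ y^p := Real.rpow_nonneg hy p
  have hdp : 0 ≤ d^p := Real.rpow_nonneg hd p
  have hxb : x^p ≤ (1+δ)^P * y^p + (1+1/δ)^P * d^p := by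
    calc x^p ≤ (y+d)^p := Real.rpow_le_rpow hx hxyd (by linarith)
      _ ≤ _ := BL_claim1 hp1 hpP hy hd hδ
  have hyb : y^p ≤ (1+δ)^P * x^p + (1+1/δ)^P * d^p := by
    calc y^p ≤ (x+d)^p := Real.rpow_le_rpow hy hyxd (by linarith)
      _ ≤ _ := BL_claim1 hp1 hpP hx hd hδ
  rw [abs_le]
  constructor
  · nlinarith [mul_le_mul_of_nonneg_left hxb (sub_nonneg.mpr hA),
      mul_nonneg (mul_nonneg (sub_nonneg.mpr hA) (sub_nonneg.mpr hA)) hyp,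
      mul_nonneg (mul_nonneg (sub_nonneg.mpr hA) hK) hdp,
      mul_nonneg hK hdp, mul_nonneg (sub_nonneg.mpr hA) hyp]
  · nlinarith [mul_le_mul_of_nonneg_left hyb (sub_nonneg.mpr hA),
      mul_nonneg (mul_nonneg (sub_nonneg.mpr hA) (sub_nonneg.mpr hA)) hyp,
      mul_nonneg (mul_nonneg (sub_nonneg.mpr hA) hK) hdp,
      mul_nonneg hK hdp, mul_nonneg (sub_nonneg.mpr hA) hyp]

private lemma BL_smallE {P : ℝ} (hP : 0 ≤ P) {ε : ℝ} (hε : 0 < ε) :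
    ∃ δ : ℝ, 0 < δ ∧ ((1+δ)^P - 1) * (1+δ)^P ≤ ε := by
  have h1 : ContinuousAt (fun δ : ℝ => (1+δ)^P) 0 := by
    have h2 : ContinuousAt (fun s : ℝ => s ^ P) ((fun δ : ℝ => 1+δ) 0) :=
      Real.continuousAt_rpow_const _ _ (Or.inl (by norm_num))
    exact h2.comp (continuousAt_const.add continuousAt_id)
  have hc : ContinuousAt (fun δ : ℝ => ((1+δ)^P - 1) * ((1+δ)^P)) 0 :=
    (h1.sub continuousAt_const).mul h1
  have ht : Tendsto (fun δ : ℝ => ((1+δ)^P - 1) * ((1+δ)^P)) (𝓝 0) (𝓝 0) := by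
    have h0 : ((1+(0:ℝ))^P - 1) * ((1+(0:ℝ))^P) = 0 := by
      norm_num [Real.one_rpow]
    simpa [h0] using hc.tendsto
  have hev : ∀ᶠ δ in 𝓝 (0:ℝ), ((1+δ)^P - 1) * ((1+δ)^P) < ε :=
    ht.eventually_lt_const hε
  rw [Metric.eventually_nhds_iff] at hev
  obtain ⟨r, hr, hrr⟩ := hev
  refine ⟨r/2, by positivity, ?_⟩
  have hd : dist (r/2) (0:ℝ) < r := by
    rw [Real.dist_eq, sub_zero, abs_of_pos (by positivity)]
    linarith
  exact (hrr hd).le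

/-- Brezis–Lieb lemma, first version: if `η_n → η` a.e. and the
`L^{h(x)}` norms of `η_n` are bounded, then `η ∈ L^{h(x)}` and
`∫(|η_n|^{h(x)} - |η_n - η|^{h(x)} - |η|^{h(x)}) → 0`. -/
theorem brezis_lieb_first {N m : ℕ} (h : RN N → ℝ) (η : ℕ → RN N → Rm m) (η₀ : RN N → Rm m)
    (hhm : Measurable h) (hηm : ∀ n, Measurable (η n)) (hη₀m : Measurable η₀)
    (hlow : ∀ᵐ x : RN N, 1 ≤ h x) (hbd : ∃ C : ℝ, ∀ᵐ x : RN N, h x ≤ C)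
    (hmem : ∀ n, Integrable (fun x => ‖η n x‖ ^ h x) (volume : Measure (RN N)))
    (hae : ∀ᵐ x : RN N, Tendsto (fun n => η n x) atTop (nhds (η₀ x)))
    (hsup : ∃ C : ℝ, ∀ n, luxNormV h (η n) ≤ C) :
    Integrable (fun x => ‖η₀ x‖ ^ h x) (volume : Measure (RN N)) ∧
    Tendsto (fun n => ∫ x, (‖η n x‖ ^ h x - ‖η n x - η₀ x‖ ^ h x - ‖η₀ x‖ ^ h x))
      atTop (nhds 0) := by
  obtain ⟨C₀, hC₀⟩ := hbd
  set P : ℝ := max C₀ 1 with hPdef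
  have hP1 : (1:ℝ) ≤ P := le_max_right _ _
  have hPae : ∀ᵐ x : RN N, 1 ≤ h x ∧ h x ≤ P := by
    filter_upwards [hlow, hC₀] with x h1 h2 using ⟨h1, h2.trans (le_max_left _ _)⟩
  obtain ⟨C, hC⟩ := hsup
  have hFnn : ∀ n x, 0 ≤ ‖η n x‖ ^ h x := fun n x => Real.rpow_nonneg (norm_nonneg _) _
  have hF0nn : ∀ x, 0 ≤ ‖η₀ x‖ ^ h x := fun x => Real.rpow_nonneg (norm_nonneg _) _
  have hGnn : ∀ n x, 0 ≤ ‖η n x - η₀ x‖ ^ h x := fun n x => Real.rpow_nonneg (norm_nonneg _) _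
  -- Step 1: uniform bound on ∫ ‖η n‖^h
  set T : ℝ := (max (C+1) 1) ^ P with hT
  have hT0 : (0:ℝ) < max (C+1) 1 := lt_of_lt_of_le one_pos (le_max_right _ _)
  have hTpos : 0 < T := Real.rpow_pos_of_pos hT0 _
  have hint : ∀ n, ∀ t : ℝ, 0 < t → Integrable (fun x => (‖η n x‖ / t) ^ h x)
      (volume : Measure (RN N)) := by
    intro n t ht
    have hmeas : AEStronglyMeasurable (fun x => (‖η n x‖ / t) ^ h x)
        (volume : Measure (RN N)) :=
      (((hηm n).norm.div_const t).pow hhm).aestronglyMeasurable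
    refine Integrable.mono' ((hmem n).const_mul (max (1/t) ((1/t)^P))) hmeas ?_
    filter_upwards [hPae] with x hx
    obtain ⟨h1, h2⟩ := hx
    have hb : (‖η n x‖ / t) ^ h x = ‖η n x‖ ^ h x * (1/t) ^ h x := by
      rw [← Real.mul_rpow (norm_nonneg _) (by positivity)]
      congr 1; field_simp
    rw [Real.norm_eq_abs, abs_of_nonneg (Real.rpow_nonneg (by positivity) _), hb,
      mul_comm (max (1/t) ((1/t)^P)) _]
    refine mul_le_mul_of_nonneg_left ?_ (hFnn n x)
    -- (1/t)^(h x) ≤ max (1/t) ((1/t)^P)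
    rcases le_total ((1:ℝ)/t) 1 with hcase | hcase
    · calc (1/t) ^ h x ≤ (1/t) ^ (1:ℝ) :=
          Real.rpow_le_rpow_of_exponent_ge (by positivity) hcase h1
        _ = 1/t := Real.rpow_one _
        _ ≤ _ := le_max_left _ _
    · exact (Real.rpow_le_rpow_of_exponent_le hcase h2).trans (le_max_right _ _)
  have hMbound : ∀ n, ∫ x, ‖η n x‖ ^ h x ≤ T := by
    intro n
    have hSne : ({t : ℝ | 0 < t ∧ (∫ x, (‖η n x‖ / t) ^ h x) ≤ 1}).Nonempty := by
      set t₀ : ℝ := (∫ x, ‖η n x‖ ^ h x) + 1 with ht₀def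
      have hInn : 0 ≤ ∫ x, ‖η n x‖ ^ h x := integral_nonneg (hFnn n)
      have ht₀1 : (1:ℝ) ≤ t₀ := by simp only [ht₀def]; linarith
      have ht₀ : (0:ℝ) < t₀ := by linarith
      refine ⟨t₀, ht₀, ?_⟩
      have hptw : ∀ᵐ x : RN N, (‖η n x‖ / t₀) ^ h x ≤ (‖η n x‖ ^ h x) / t₀ := by
        filter_upwards [hPae] with x hx
        obtain ⟨h1, _⟩ := hx
        rw [Real.div_rpow (norm_nonneg _) ht₀.le]
        refine div_le_div_of_nonneg_left (hFnn n x) ht₀ ?_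
        calc t₀ = t₀ ^ (1:ℝ) := (Real.rpow_one _).symm
          _ ≤ t₀ ^ h x := Real.rpow_le_rpow_of_exponent_le ht₀1 h1
      calc ∫ x, (‖η n x‖ / t₀) ^ h x ≤ ∫ x, (‖η n x‖ ^ h x) / t₀ :=
            integral_mono_ae (hint n t₀ ht₀) ((hmem n).div_const t₀) hptw
        _ = (∫ x, ‖η n x‖ ^ h x) / t₀ := integral_div _ _
        _ ≤ 1 := by rw [div_le_one ht₀]; simp only [ht₀def]; linarith
    have hBdd : BddBelow {t : ℝ | 0 < t ∧ (∫ x, (‖η n x‖ / t) ^ h x) ≤ 1} :=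
      ⟨0, fun t ht => ht.1.le⟩
    have hlt : sInf {t : ℝ | 0 < t ∧ (∫ x, (‖η n x‖ / t) ^ h x) ≤ 1} < C + 1 :=
      lt_of_le_of_lt (hC n) (lt_add_one C)
    obtain ⟨t, htmem, htC⟩ := (csInf_lt_iff hBdd hSne).mp hlt
    obtain ⟨htpos, htint⟩ := htmem
    have hptw2 : ∀ᵐ x : RN N, ‖η n x‖ ^ h x ≤ T * ((‖η n x‖ / t) ^ h x) := by
      filter_upwards [hPae] with x hx
      obtain ⟨h1, h2⟩ := hx
      have hb : ‖η n x‖ ^ h x = t ^ h x * (‖η n x‖ / t) ^ h x := by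
        rw [← Real.mul_rpow htpos.le (by positivity)]
        congr 1; field_simp
      rw [hb]
      refine mul_le_mul_of_nonneg_right ?_ (Real.rpow_nonneg (by positivity) _)
      calc t ^ h x ≤ (max (C+1) 1) ^ h x :=
            Real.rpow_le_rpow htpos.le (htC.le.trans (le_max_left _ _)) (by linarith)
        _ ≤ T := Real.rpow_le_rpow_of_exponent_le (le_max_right _ _) h2
    calc ∫ x, ‖η n x‖ ^ h x ≤ ∫ x, T * ((‖η n x‖ / t) ^ h x) :=
          integral_mono_ae (hmem n) ((hint n t htpos).const_mul T) hptw2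
      _ = T * ∫ x, (‖η n x‖ / t) ^ h x := integral_const_mul _ _
      _ ≤ T * 1 := mul_le_mul_of_nonneg_left htint hTpos.le
      _ = T := mul_one T
  -- a.e. convergence of F n to F₀
  have htendF : ∀ᵐ x : RN N, Tendsto (fun n => ‖η n x‖ ^ h x) atTop (𝓝 (‖η₀ x‖ ^ h x)) := by
    filter_upwards [hae, hPae] with x hx hp
    obtain ⟨h1, _⟩ := hp
    have hn : Tendsto (fun n => ‖η n x‖) atTop (𝓝 ‖η₀ x‖) :=
      (continuous_norm.tendsto _).comp hx
    have hc : ContinuousAt (fun s : ℝ => s ^ h x) ‖η₀ x‖ :=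
      Real.continuousAt_rpow_const _ _ (Or.inr (by linarith))
    exact hc.tendsto.comp hn
  -- Step 2: Fatou, F₀ integrable with ∫ F₀ ≤ T
  have hlintF : ∀ n, ∫⁻ x, ENNReal.ofReal (‖η n x‖ ^ h x) ≤ ENNReal.ofReal T := by
    intro n
    rw [← MeasureTheory.ofReal_integral_eq_lintegral_ofReal (hmem n)
      (Filter.Eventually.of_forall (hFnn n))]
    exact ENNReal.ofReal_le_ofReal (hMbound n)
  have hlintF0 : ∫⁻ x, ENNReal.ofReal (‖η₀ x‖ ^ h x) ≤ ENNReal.ofReal T := by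
    have hmeasn : ∀ n, Measurable fun x : RN N => ENNReal.ofReal (‖η n x‖ ^ h x) :=
      fun n => ((hηm n).norm.pow hhm).ennreal_ofReal
    calc ∫⁻ x, ENNReal.ofReal (‖η₀ x‖ ^ h x)
        = ∫⁻ x, Filter.atTop.liminf (fun n => ENNReal.ofReal (‖η n x‖ ^ h x)) := by
          refine lintegral_congr_ae ?_
          filter_upwards [htendF] with x hx
          exact ((ENNReal.continuous_ofReal.tendsto _).comp hx).liminf_eq.symm
      _ ≤ Filter.atTop.liminf (fun n => ∫⁻ x, ENNReal.ofReal (‖η n x‖ ^ h x)) :=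
          lintegral_liminf_le hmeasn
      _ ≤ ENNReal.ofReal T := by
          refine le_trans (liminf_le_liminf (Filter.Eventually.of_forall hlintF)) ?_
          simp [Filter.liminf_const]
  have hF0int : Integrable (fun x => ‖η₀ x‖ ^ h x) (volume : Measure (RN N)) := by
    refine ⟨(hη₀m.norm.pow hhm).aestronglyMeasurable, ?_⟩
    rw [hasFiniteIntegral_iff_ofReal (Filter.Eventually.of_forall hF0nn)]
    exact lt_of_le_of_lt hlintF0 ENNReal.ofReal_lt_top
  have hF0bound : ∫ x, ‖η₀ x‖ ^ h x ≤ T := by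
    have heq := MeasureTheory.ofReal_integral_eq_lintegral_ofReal hF0int
      (Filter.Eventually.of_forall hF0nn)
    have h2 : ENNReal.ofReal (∫ x, ‖η₀ x‖ ^ h x) ≤ ENNReal.ofReal T := heq ▸ hlintF0
    exact (ENNReal.ofReal_le_ofReal_iff hTpos.le).mp h2
  -- Step 3: G n integrable with uniform bound
  have hGptw : ∀ n, ∀ᵐ x : RN N, ‖η n x - η₀ x‖ ^ h x
      ≤ (2:ℝ)^P * (‖η n x‖ ^ h x) + (2:ℝ)^P * (‖η₀ x‖ ^ h x) := by
    intro n
    filter_upwards [hPae] with x hx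
    obtain ⟨h1, h2⟩ := hx
    calc ‖η n x - η₀ x‖ ^ h x ≤ (‖η n x‖ + ‖η₀ x‖) ^ h x :=
          Real.rpow_le_rpow (norm_nonneg _) (norm_sub_le _ _) (by linarith)
      _ ≤ (1+1)^P * ‖η n x‖ ^ h x + (1+1/1)^P * ‖η₀ x‖ ^ h x :=
          BL_claim1 h1 h2 (norm_nonneg _) (norm_nonneg _) one_pos
      _ = (2:ℝ)^P * (‖η n x‖ ^ h x) + (2:ℝ)^P * (‖η₀ x‖ ^ h x) := by norm_num
  have hGint : ∀ n, Integrable (fun x => ‖η n x - η₀ x‖ ^ h x) (volume : Measure (RN N)) := by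
    intro n
    refine Integrable.mono'
      (((hmem n).const_mul ((2:ℝ)^P)).add (hF0int.const_mul ((2:ℝ)^P)))
      ((((hηm n).sub hη₀m).norm.pow hhm).aestronglyMeasurable) ?_
    filter_upwards [hGptw n] with x hx
    rwa [Real.norm_eq_abs, abs_of_nonneg (hGnn n x)]
  have hGbound : ∀ n, ∫ x, ‖η n x - η₀ x‖ ^ h x ≤ (2:ℝ)^P * (2*T) := by
    intro n
    have h2P : (0:ℝ) ≤ (2:ℝ)^P := by positivity
    calc ∫ x, ‖η n x - η₀ x‖ ^ h x
        ≤ ∫ x, ((2:ℝ)^P * (‖η n x‖ ^ h x) + (2:ℝ)^P * (‖η₀ x‖ ^ h x)) :=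
          integral_mono_ae (hGint n)
            (((hmem n).const_mul _).add (hF0int.const_mul _)) (hGptw n)
      _ = (2:ℝ)^P * (∫ x, ‖η n x‖ ^ h x) + (2:ℝ)^P * (∫ x, ‖η₀ x‖ ^ h x) := by
          rw [integral_add ((hmem n).const_mul _) (hF0int.const_mul _),
            integral_const_mul, integral_const_mul]
      _ ≤ (2:ℝ)^P * T + (2:ℝ)^P * T := by
          have := hMbound n
          nlinarith [hF0bound]
      _ = (2:ℝ)^P * (2*T) := by ring
  -- Step 4: main convergence
  refine ⟨hF0int, ?_⟩
  set B : ℝ := (2:ℝ)^P * (2*T) with hB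
  have hBpos : 0 < B := by positivity
  rw [Metric.tendsto_atTop]
  intro ε hε
  obtain ⟨δ, hδpos, hδE⟩ := BL_smallE (le_trans zero_le_one hP1)
    (show (0:ℝ) < ε/(2*(B+1)) by positivity)
  set A : ℝ := (1+δ)^P with hAdef
  set K : ℝ := (1+1/δ)^P with hKdef
  set E : ℝ := (A - 1) * A with hEdef
  set K₂ : ℝ := A * K + 1 with hK₂def
  have hA1 : (1:ℝ) ≤ A := by
    rw [hAdef]
    have := Real.rpow_le_rpow_of_exponent_le (by linarith : (1:ℝ) ≤ 1+δ)
      (le_trans zero_le_one hP1 : (0:ℝ) ≤ P)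
    simpa [Real.rpow_zero] using this
  have hK0 : (0:ℝ) ≤ K := by rw [hKdef]; positivity
  have hE0 : (0:ℝ) ≤ E := by rw [hEdef]; nlinarith
  have hK₂0 : (0:ℝ) ≤ K₂ := by rw [hK₂def]; nlinarith
  -- pointwise bound on W n
  have hWptw : ∀ n, ∀ᵐ x : RN N,
      |‖η n x‖ ^ h x - ‖η n x - η₀ x‖ ^ h x - ‖η₀ x‖ ^ h x|
      ≤ E * (‖η n x - η₀ x‖ ^ h x) + K₂ * (‖η₀ x‖ ^ h x) := by
    intro n
    filter_upwards [hPae] with x hx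
    obtain ⟨h1, h2⟩ := hx
    have hxyd : ‖η n x‖ ≤ ‖η n x - η₀ x‖ + ‖η₀ x‖ := by
      calc ‖η n x‖ = ‖(η n x - η₀ x) + η₀ x‖ := by rw [sub_add_cancel]
        _ ≤ _ := norm_add_le _ _
    have hyxd : ‖η n x - η₀ x‖ ≤ ‖η n x‖ + ‖η₀ x‖ := norm_sub_le _ _
    have hk := BL_key2 (p := h x) (P := P) (δ := δ) h1 h2 hδpos
      (norm_nonneg (η n x)) (norm_nonneg (η n x - η₀ x)) (norm_nonneg (η₀ x)) hxyd hyxd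
    rw [← hAdef, ← hKdef] at hk
    have habs : |‖η n x‖ ^ h x - ‖η n x - η₀ x‖ ^ h x - ‖η₀ x‖ ^ h x|
        ≤ |‖η n x‖ ^ h x - ‖η n x - η₀ x‖ ^ h x| + ‖η₀ x‖ ^ h x := by
      have h3 := abs_sub (‖η n x‖ ^ h x - ‖η n x - η₀ x‖ ^ h x) (‖η₀ x‖ ^ h x)
      rw [abs_of_nonneg (hF0nn x)] at h3
      exact h3
    rw [hEdef, hK₂def]
    nlinarith [hF0nn x]
  -- the functions f n and dominated convergence
  have hWint : ∀ n, Integrable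
      (fun x => ‖η n x‖ ^ h x - ‖η n x - η₀ x‖ ^ h x - ‖η₀ x‖ ^ h x)
      (volume : Measure (RN N)) :=
    fun n => ((hmem n).sub (hGint n)).sub hF0int
  have hfint : ∀ n, Integrable
      (fun x => max (|‖η n x‖ ^ h x - ‖η n x - η₀ x‖ ^ h x - ‖η₀ x‖ ^ h x|
        - E * (‖η n x - η₀ x‖ ^ h x)) 0) (volume : Measure (RN N)) :=
    fun n => ((hWint n).abs.sub ((hGint n).const_mul E)).pos_part
  have hfbound : ∀ n, ∀ᵐ x : RN N,
      ‖max (|‖η n x‖ ^ h x - ‖η n x - η₀ x‖ ^ h x - ‖η₀ x‖ ^ h x|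
        - E * (‖η n x - η₀ x‖ ^ h x)) 0‖ ≤ K₂ * (‖η₀ x‖ ^ h x) := by
    intro n
    filter_upwards [hWptw n] with x hx
    rw [Real.norm_eq_abs, abs_of_nonneg (le_max_right _ _)]
    refine max_le ?_ (by nlinarith [hF0nn x])
    nlinarith [hGnn n x, hF0nn x]
  have hftend : ∀ᵐ x : RN N, Tendsto
      (fun n => max (|‖η n x‖ ^ h x - ‖η n x - η₀ x‖ ^ h x - ‖η₀ x‖ ^ h x|
        - E * (‖η n x - η₀ x‖ ^ h x)) 0) atTop (𝓝 0) := by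
    filter_upwards [hae, htendF, hPae] with x hx hFt hp
    obtain ⟨h1, _⟩ := hp
    have hGt : Tendsto (fun n => ‖η n x - η₀ x‖ ^ h x) atTop (𝓝 0) := by
      have h0 : Tendsto (fun n => ‖η n x - η₀ x‖) atTop (𝓝 0) := by
        have := (hx.sub (tendsto_const_nhds (x := η₀ x)))
        rw [sub_self] at this
        simpa [Function.comp_def] using (continuous_norm.tendsto (0 : Rm m)).comp this
      have hc : ContinuousAt (fun s : ℝ => s ^ h x) 0 :=
        Real.continuousAt_rpow_const _ _ (Or.inr (by linarith))
      have := hc.tendsto.comp h0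
      rwa [Real.zero_rpow (by linarith : h x ≠ 0)] at this
    have hWt : Tendsto
        (fun n => ‖η n x‖ ^ h x - ‖η n x - η₀ x‖ ^ h x - ‖η₀ x‖ ^ h x) atTop (𝓝 0) := by
      have := (hFt.sub hGt).sub (tendsto_const_nhds (x := ‖η₀ x‖ ^ h x))
      simpa using this
    have habs : Tendsto
        (fun n => |‖η n x‖ ^ h x - ‖η n x - η₀ x‖ ^ h x - ‖η₀ x‖ ^ h x|
          - E * (‖η n x - η₀ x‖ ^ h x)) atTop (𝓝 0) := by
      have := hWt.abs.sub (hGt.const_mul E)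
      simpa using this
    have := habs.max (tendsto_const_nhds (x := (0:ℝ)))
    simpa using this
  have hdom : Tendsto (fun n => ∫ x,
      max (|‖η n x‖ ^ h x - ‖η n x - η₀ x‖ ^ h x - ‖η₀ x‖ ^ h x|
        - E * (‖η n x - η₀ x‖ ^ h x)) 0) atTop (𝓝 0) := by
    have := MeasureTheory.tendsto_integral_of_dominated_convergence
      (F := fun n x => max (|‖η n x‖ ^ h x - ‖η n x - η₀ x‖ ^ h x - ‖η₀ x‖ ^ h x|
        - E * (‖η n x - η₀ x‖ ^ h x)) 0)
      (f := fun _ => (0:ℝ))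
      (fun x => K₂ * (‖η₀ x‖ ^ h x))
      (fun n => (hfint n).aestronglyMeasurable)
      (hF0int.const_mul K₂) hfbound hftend
    simpa using this
  obtain ⟨Nn, hNn⟩ := Filter.eventually_atTop.mp (hdom.eventually_lt_const
    (show (0:ℝ) < ε/2 by positivity))
  refine ⟨Nn, fun n hn => ?_⟩
  rw [Real.dist_eq, sub_zero]
  have habsle : |∫ x, (‖η n x‖ ^ h x - ‖η n x - η₀ x‖ ^ h x - ‖η₀ x‖ ^ h x)|
      ≤ ∫ x, |‖η n x‖ ^ h x - ‖η n x - η₀ x‖ ^ h x - ‖η₀ x‖ ^ h x| := by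
    have := MeasureTheory.norm_integral_le_integral_norm
      (f := fun x => ‖η n x‖ ^ h x - ‖η n x - η₀ x‖ ^ h x - ‖η₀ x‖ ^ h x)
      (μ := (volume : Measure (RN N)))
    simpa [Real.norm_eq_abs] using this
  have h2 : ∫ x, |‖η n x‖ ^ h x - ‖η n x - η₀ x‖ ^ h x - ‖η₀ x‖ ^ h x|
      ≤ (∫ x, max (|‖η n x‖ ^ h x - ‖η n x - η₀ x‖ ^ h x - ‖η₀ x‖ ^ h x|
        - E * (‖η n x - η₀ x‖ ^ h x)) 0) + E * ∫ x, ‖η n x - η₀ x‖ ^ h x := by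
    have hptw : ∀ x : RN N, |‖η n x‖ ^ h x - ‖η n x - η₀ x‖ ^ h x - ‖η₀ x‖ ^ h x|
        ≤ max (|‖η n x‖ ^ h x - ‖η n x - η₀ x‖ ^ h x - ‖η₀ x‖ ^ h x|
          - E * (‖η n x - η₀ x‖ ^ h x)) 0 + E * (‖η n x - η₀ x‖ ^ h x) := by
      intro x
      have hle := le_max_left (|‖η n x‖ ^ h x - ‖η n x - η₀ x‖ ^ h x - ‖η₀ x‖ ^ h x|
        - E * (‖η n x - η₀ x‖ ^ h x)) 0
      linarith
    calc ∫ x, |‖η n x‖ ^ h x - ‖η n x - η₀ x‖ ^ h x - ‖η₀ x‖ ^ h x|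
        ≤ ∫ x, (max (|‖η n x‖ ^ h x - ‖η n x - η₀ x‖ ^ h x - ‖η₀ x‖ ^ h x|
          - E * (‖η n x - η₀ x‖ ^ h x)) 0 + E * (‖η n x - η₀ x‖ ^ h x)) :=
          integral_mono_ae (hWint n).abs ((hfint n).add ((hGint n).const_mul E))
            (Filter.Eventually.of_forall hptw)
      _ = _ := by
          rw [integral_add (hfint n) ((hGint n).const_mul E), integral_const_mul]
  have h3 : E * ∫ x, ‖η n x - η₀ x‖ ^ h x ≤ ε/2 := by
    have hGB := hGbound n
    have hGnn' : 0 ≤ ∫ x, ‖η n x - η₀ x‖ ^ h x := integral_nonneg (hGnn n)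
    have h4 : E * ∫ x, ‖η n x - η₀ x‖ ^ h x ≤ E * B :=
      mul_le_mul_of_nonneg_left hGB hE0
    have h5 : E * B ≤ ε/(2*(B+1)) * B := by
      rw [hEdef, hAdef]
      exact mul_le_mul_of_nonneg_right hδE hBpos.le
    have h6 : ε/(2*(B+1)) * B ≤ ε/2 := by
      rw [div_mul_eq_mul_div, div_le_div_iff₀ (by positivity) (by norm_num)]
      nlinarith
    linarith
  have h7 := hNn n hn
  linarith
end
end

section
/- Brezis–Lieb lemma for gradients of power-type nonlinearities: if (η_n) ⊂ L^{h(x)}(R^N, R^m) satisfies η_n(x) → η(x) a.e. and sup_n ||η_n||_{L^{h(x)}} < ∞, then ∫ | |η_n|^{h(x)−2} η_n − |η_n − η|^{h(x)−2}(η_n − η) − |η|^{h(x)−2} η |^{h'(x)} dx → 0 as n → ∞, where h'(x) = h(x)/(h(x)−1). -/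
open MeasureTheory Filter Topology

noncomputable section

variable {E : Type*} [NormedAddCommGroup E] [NormedSpace ℝ E]

/-- The power nonlinearity `Φ_p(v) = ‖v‖^{p-2} v`. -/
def Phi (p : ℝ) (v : E) : E := (‖v‖ ^ (p - 2)) • v

lemma Phi_zero (p : ℝ) : Phi p (0 : E) = 0 := by simp [Phi]

lemma norm_Phi (p : ℝ) (v : E) (hv : v ≠ 0) : ‖Phi p v‖ = ‖v‖ ^ (p - 1) := by
  have h0 : (0:ℝ) < ‖v‖ := norm_pos_iff.2 hv
  rw [Phi, norm_smul, Real.norm_eq_abs, abs_of_nonneg (Real.rpow_nonneg (norm_nonneg v) _)]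
  rw [show p - 1 = (p - 2) + 1 by ring, Real.rpow_add h0, Real.rpow_one]

lemma contAt_Phi {p : ℝ} (hp : 1 < p) (v : E) :
    ContinuousAt (fun q : E × ℝ => Phi q.2 q.1) (v, p) := by
  by_cases hv : v = 0
  · subst hv
    have h0 : (fun q : E × ℝ => Phi q.2 q.1) (0, p) = 0 := Phi_zero p
    rw [ContinuousAt]
    simp only [h0, Phi_zero]
    have he : (0:ℝ) < (p - 1) / 2 := by linarith
    have hev : ∀ᶠ q : E × ℝ in 𝓝 ((0 : E), p), ‖Phi q.2 q.1‖ ≤ ‖q.1‖ ^ ((p - 1) / 2) := by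
      have h1 : ∀ᶠ q : E × ℝ in 𝓝 ((0 : E), p), ‖q.1‖ < 1 := by
        have : Tendsto (fun q : E × ℝ => ‖q.1‖) (𝓝 ((0:E), p)) (𝓝 ‖(0:E)‖) :=
          (continuous_fst.norm).continuousAt
        simpa using this.eventually_lt_const (by norm_num : ‖(0:E)‖ < 1)
      have h2 : ∀ᶠ q : E × ℝ in 𝓝 ((0 : E), p), (p + 1) / 2 < q.2 := by
        have : Tendsto (fun q : E × ℝ => q.2) (𝓝 ((0:E), p)) (𝓝 p) := continuous_snd.continuousAt
        exact this.eventually_const_lt (by linarith)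
      filter_upwards [h1, h2] with q hq1 hq2
      by_cases hq : q.1 = 0
      · rw [hq, Phi_zero]
        simp [Real.rpow_nonneg]
      · have h0 : (0:ℝ) < ‖q.1‖ := norm_pos_iff.2 hq
        rw [norm_Phi _ _ hq]
        exact Real.rpow_le_rpow_of_exponent_ge h0 hq1.le (by linarith)
    have hlim : Tendsto (fun q : E × ℝ => ‖q.1‖ ^ ((p - 1) / 2)) (𝓝 ((0:E), p)) (𝓝 0) := by
      have : Tendsto (fun q : E × ℝ => ‖q.1‖) (𝓝 ((0:E), p)) (𝓝 0) := by
        have h := (continuous_norm.comp (continuous_fst : Continuous fun q : E × ℝ => q.1)).continuousAt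
          (x := ((0:E), p))
        simpa [ContinuousAt, Function.comp_def] using h
      simpa [Real.zero_rpow he.ne'] using this.rpow_const (Or.inr he.le)
    exact squeeze_zero_norm' hev hlim
  · have h1 : ContinuousAt (fun q : E × ℝ => ‖q.1‖ ^ (q.2 - 2)) (v, p) := by
      exact ContinuousAt.rpow (continuous_fst.norm).continuousAt
        (continuous_snd.sub continuous_const).continuousAt (Or.inl (norm_ne_zero_iff.2 hv))
    exact h1.smul continuous_fst.continuousAt

lemma Phi_smul {p r : ℝ} (hr : 0 < r) (v : E) :
    Phi p (r • v) = (r ^ (p - 1)) • Phi p v := by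
  by_cases hv : v = 0
  · simp [hv, Phi]
  rw [Phi, Phi, norm_smul, Real.norm_eq_abs, abs_of_pos hr,
    Real.mul_rpow hr.le (norm_nonneg v), smul_smul, smul_smul]
  congr 1
  rw [show p - 1 = (p - 2) + 1 by ring, Real.rpow_add hr, Real.rpow_one]
  ring


variable {E : Type*} [NormedAddCommGroup E] [NormedSpace ℝ E] [ProperSpace E]

/-- The Brezis–Lieb remainder quantity. -/
def Fq (q : (E × E) × ℝ) : ℝ :=
  ‖Phi q.2 (q.1.1 + q.1.2) - Phi q.2 q.1.1 - Phi q.2 q.1.2‖ ^ (q.2 / (q.2 - 1))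

lemma Fq_nonneg (q : (E × E) × ℝ) : 0 ≤ Fq q := Real.rpow_nonneg (norm_nonneg _) _

lemma Fq_contOn {c C : ℝ} (hc : 1 < c) :
    ContinuousOn (Fq : (E × E) × ℝ → ℝ)
      ((Metric.closedBall 0 1 ×ˢ Metric.closedBall 0 1) ×ˢ Set.Icc c C) := by
  intro q hq
  have hp : 1 < q.2 := lt_of_lt_of_le hc hq.2.1
  apply ContinuousAt.continuousWithinAt
  have hmap : ∀ (g : (E × E) × ℝ → E), Continuous g →
      ContinuousAt (fun q' : (E × E) × ℝ => Phi q'.2 (g q')) q := by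
    intro g hg
    have hmk : Continuous (fun q' : (E × E) × ℝ => (g q', q'.2)) := by fun_prop
    exact ContinuousAt.comp (g := fun q' : E × ℝ => Phi q'.2 q'.1)
      (f := fun q' : (E × E) × ℝ => (g q', q'.2)) (x := q)
      (contAt_Phi hp (g q)) hmk.continuousAt
  have h1 := hmap (fun q' => q'.1.1 + q'.1.2) (by fun_prop)
  have h2 := hmap (fun q' => q'.1.1) (by fun_prop)
  have h3 := hmap (fun q' => q'.1.2) (by fun_prop)
  have hin : ContinuousAt
      (fun q' : (E × E) × ℝ => ‖Phi q'.2 (q'.1.1 + q'.1.2) - Phi q'.2 q'.1.1 - Phi q'.2 q'.1.2‖)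
      q := ((h1.sub h2).sub h3).norm
  have hexp : ContinuousAt (fun q' : (E × E) × ℝ => q'.2 / (q'.2 - 1)) q :=
    (continuous_snd.continuousAt).div ((continuous_snd.sub continuous_const).continuousAt)
      (fun hq0 => by have := sub_eq_zero.1 hq0; linarith)
  exact hin.rpow hexp (Or.inr (div_pos (by linarith) (by linarith)))


lemma key_ineq {c C : ℝ} (hc : 1 < c) (hcC : c ≤ C) {ε : ℝ} (hε : 0 < ε) :
    ∃ D : ℝ, 0 ≤ D ∧ ∀ (u b : E) (p : ℝ), p ∈ Set.Icc c C →
      ‖Phi p (u + b) - Phi p u - Phi p b‖ ^ (p / (p - 1)) ≤ ε * ‖u‖ ^ p + D * ‖b‖ ^ p := by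
  classical
  set K : Set ((E × E) × ℝ) :=
    (Metric.closedBall 0 1 ×ˢ Metric.closedBall 0 1) ×ˢ Set.Icc c C with hKdef
  have hK : IsCompact K :=
    (((isCompact_closedBall _ _).prod (isCompact_closedBall _ _)).prod isCompact_Icc)
  have hKne : K.Nonempty := ⟨((0, 0), c), by
    simp [hKdef, Set.mem_prod, Metric.mem_closedBall, hcC]⟩
  have hFc : ContinuousOn (Fq : (E × E) × ℝ → ℝ) K := Fq_contOn hc
  -- maximum of Fq on K
  obtain ⟨qB, hqBK, hqB⟩ := hK.exists_isMaxOn hKne hFc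
  set B : ℝ := Fq qB with hBdef
  have hB0 : 0 ≤ B := Fq_nonneg qB
  -- the set where Fq is at least ε
  set S : Set ((E × E) × ℝ) := K ∩ Fq ⁻¹' Set.Ici ε with hSdef
  have hScl : IsClosed S := hFc.preimage_isClosed_of_isClosed
    (((Metric.isClosed_closedBall.prod Metric.isClosed_closedBall).prod isClosed_Icc)) isClosed_Ici
  have hScomp : IsCompact S := hK.of_isClosed_subset hScl Set.inter_subset_left
  -- choose δ
  have hδex : ∃ δ : ℝ, 0 < δ ∧ δ ≤ 1 ∧ ∀ q ∈ K, ‖q.1.2‖ < δ → Fq q < ε := by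
    by_cases hS0 : S.Nonempty
    · obtain ⟨q₀, hq₀S, hmin⟩ := hScomp.exists_isMinOn hS0
        ((continuous_norm.comp (continuous_snd.comp continuous_fst)).continuousOn :
          ContinuousOn (fun q : (E × E) × ℝ => ‖q.1.2‖) S)
      have hq₀pos : 0 < ‖q₀.1.2‖ := by
        rcases eq_or_lt_of_le (norm_nonneg q₀.1.2) with h0 | h0
        · exfalso
          have hb0 : q₀.1.2 = 0 := by
            have := h0.symm; rwa [norm_eq_zero] at this
          have hε' : ε ≤ Fq q₀ := hq₀S.2
          have hp : 1 < q₀.2 := lt_of_lt_of_le hc hq₀S.1.2.1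
          have : Fq q₀ = 0 := by
            rw [Fq, hb0, Phi_zero, add_zero, sub_zero, sub_self, norm_zero]
            exact Real.zero_rpow (ne_of_gt (div_pos (by linarith) (by linarith)))
          linarith
        · exact h0
      refine ⟨min ‖q₀.1.2‖ 1, lt_min hq₀pos one_pos, min_le_right _ _, fun q hqK hlt => ?_⟩
      by_contra hge
      push_neg at hge
      have hqS : q ∈ S := ⟨hqK, hge⟩
      have := hmin hqS
      have : ‖q₀.1.2‖ ≤ ‖q.1.2‖ := this
      have := lt_of_lt_of_le hlt (min_le_left _ _)
      linarith
    · refine ⟨1, one_pos, le_refl _, fun q hqK _ => ?_⟩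
      by_contra hge
      push_neg at hge
      exact hS0 ⟨q, hqK, hge⟩
  obtain ⟨δ, hδ0, hδ1, hδ⟩ := hδex
  have hδC : 0 < δ ^ C := Real.rpow_pos_of_pos hδ0 _
  refine ⟨max (B / δ ^ C) ε, le_max_of_le_right hε.le, fun u b p hp => ?_⟩
  set D : ℝ := max (B / δ ^ C) ε with hDdef
  have hp1 : 1 < p := lt_of_lt_of_le hc hp.1
  have hp0 : 0 < p := by linarith
  have hp'0 : 0 < p / (p - 1) := div_pos hp0 (by linarith)
  set r : ℝ := max ‖u‖ ‖b‖ with hrdef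
  rcases eq_or_lt_of_le (le_max_of_le_left (norm_nonneg u) : (0:ℝ) ≤ r) with hr0 | hr0
  · -- r = 0 : u = b = 0
    have hu : u = 0 := by
      have : ‖u‖ ≤ 0 := hr0 ▸ le_max_left _ _
      exact norm_eq_zero.1 (le_antisymm this (norm_nonneg u))
    have hb : b = 0 := by
      have : ‖b‖ ≤ 0 := hr0 ▸ le_max_right _ _
      exact norm_eq_zero.1 (le_antisymm this (norm_nonneg b))
    rw [hu, hb]
    simp only [add_zero, Phi_zero, sub_zero, sub_self, norm_zero]
    rw [Real.zero_rpow (ne_of_gt hp'0), Real.zero_rpow (ne_of_gt hp0)]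
    simp
  · -- scaling
    set u' : E := r⁻¹ • u with hu'def
    set b' : E := r⁻¹ • b with hb'def
    have hru : r • u' = u := smul_inv_smul₀ (ne_of_gt hr0) u
    have hrb : r • b' = b := smul_inv_smul₀ (ne_of_gt hr0) b
    have hnu' : ‖u'‖ ≤ 1 := by
      rw [hu'def, norm_smul, Real.norm_eq_abs, abs_of_pos (inv_pos.2 hr0)]
      rw [inv_mul_le_one₀ hr0]
      exact le_max_left _ _
    have hnb' : ‖b'‖ ≤ 1 := by
      rw [hb'def, norm_smul, Real.norm_eq_abs, abs_of_pos (inv_pos.2 hr0)]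
      rw [inv_mul_le_one₀ hr0]
      exact le_max_right _ _
    have hqK : ((u', b'), p) ∈ K := by
      refine ⟨⟨?_, ?_⟩, hp⟩ <;> simpa [Metric.mem_closedBall]
    -- scaling identity
    have hscal : ‖Phi p (u + b) - Phi p u - Phi p b‖ ^ (p / (p - 1))
        = r ^ p * Fq ((u', b'), p) := by
      have hPu : Phi p u = (r ^ (p - 1)) • Phi p u' := by rw [← hru, Phi_smul hr0]
      have hPb : Phi p b = (r ^ (p - 1)) • Phi p b' := by rw [← hrb, Phi_smul hr0]
      have hPub : Phi p (u + b) = (r ^ (p - 1)) • Phi p (u' + b') := by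
        rw [← hru, ← hrb, ← smul_add, Phi_smul hr0]
      rw [hPu, hPb, hPub, ← smul_sub, ← smul_sub, norm_smul, Real.norm_eq_abs,
        abs_of_pos (Real.rpow_pos_of_pos hr0 _),
        Real.mul_rpow (Real.rpow_nonneg hr0.le _) (norm_nonneg _),
        ← Real.rpow_mul hr0.le]
      have hpe : (p - 1) * (p / (p - 1)) = p := by
        rw [mul_comm, div_mul_cancel₀ _ (by linarith : p - 1 ≠ 0)]
      rw [hpe]
      rfl
    have hrp_pos : 0 < r ^ p := Real.rpow_pos_of_pos hr0 _
    have hrple : r ^ p ≤ ‖u‖ ^ p + ‖b‖ ^ p := by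
      rcases max_choice ‖u‖ ‖b‖ with hmc | hmc <;> rw [hrdef, hmc]
      · exact le_add_of_nonneg_right (Real.rpow_nonneg (norm_nonneg b) _)
      · exact le_add_of_nonneg_left (Real.rpow_nonneg (norm_nonneg u) _)
    by_cases hbδ : ‖b'‖ < δ
    · -- small b' : Fq < ε
      have hF : Fq ((u', b'), p) < ε := hδ _ hqK hbδ
      have : ‖Phi p (u + b) - Phi p u - Phi p b‖ ^ (p / (p - 1)) ≤ ε * r ^ p := by
        rw [hscal]
        calc r ^ p * Fq ((u', b'), p) ≤ r ^ p * ε := by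
              exact mul_le_mul_of_nonneg_left hF.le hrp_pos.le
          _ = ε * r ^ p := mul_comm _ _
      calc ‖Phi p (u + b) - Phi p u - Phi p b‖ ^ (p / (p - 1)) ≤ ε * r ^ p := this
        _ ≤ ε * (‖u‖ ^ p + ‖b‖ ^ p) := mul_le_mul_of_nonneg_left hrple hε.le
        _ = ε * ‖u‖ ^ p + ε * ‖b‖ ^ p := by ring
        _ ≤ ε * ‖u‖ ^ p + D * ‖b‖ ^ p := by
            have : ε ≤ D := le_max_right _ _
            have hbnn : (0:ℝ) ≤ ‖b‖ ^ p := Real.rpow_nonneg (norm_nonneg b) _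
            nlinarith
    · -- big b'
      push_neg at hbδ
      have hF : Fq ((u', b'), p) ≤ B := hqB hqK
      have hbr : ‖b‖ = r * ‖b'‖ := by
        rw [← hrb, norm_smul, Real.norm_eq_abs, abs_of_pos hr0]
      have hbp : r ^ p * δ ^ C ≤ ‖b‖ ^ p := by
        have h1 : δ ^ C ≤ δ ^ p :=
          Real.rpow_le_rpow_of_exponent_ge hδ0 hδ1 hp.2
        have h2 : r ^ p * δ ^ p ≤ ‖b‖ ^ p := by
          rw [hbr, Real.mul_rpow hr0.le (norm_nonneg b')]
          exact mul_le_mul_of_nonneg_left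
            (Real.rpow_le_rpow hδ0.le hbδ hp0.le) hrp_pos.le
        calc r ^ p * δ ^ C ≤ r ^ p * δ ^ p := mul_le_mul_of_nonneg_left h1 hrp_pos.le
          _ ≤ ‖b‖ ^ p := h2
      have hDB : B / δ ^ C ≤ D := le_max_left _ _
      calc ‖Phi p (u + b) - Phi p u - Phi p b‖ ^ (p / (p - 1))
          = r ^ p * Fq ((u', b'), p) := hscal
        _ ≤ r ^ p * B := mul_le_mul_of_nonneg_left hF hrp_pos.le
        _ = (B / δ ^ C) * (r ^ p * δ ^ C) := by field_simp
        _ ≤ D * ‖b‖ ^ p := by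
            have hD0 : 0 ≤ B / δ ^ C := div_nonneg hB0 hδC.le
            have := mul_le_mul hDB hbp (by positivity) (le_trans hD0 hDB)
            linarith
        _ ≤ ε * ‖u‖ ^ p + D * ‖b‖ ^ p := by
            have : 0 ≤ ε * ‖u‖ ^ p := mul_nonneg hε.le (Real.rpow_nonneg (norm_nonneg u) _)
            linarith


set_option maxHeartbeats 2000000 in
/-- Brezis–Lieb lemma, third version: if `η_n → η` a.e. and the
`L^{h(x)}` norms of `η_n` are bounded, then
`∫ | |η_n|^{h-2}η_n - |η_n-η|^{h-2}(η_n-η) - |η|^{h-2}η |^{h'} → 0`, `h' = h/(h-1)`. -/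
theorem brezis_lieb_third {N m : ℕ} (h : RN N → ℝ) (η : ℕ → RN N → Rm m) (η₀ : RN N → Rm m)
    (hhm : Measurable h) (hηm : ∀ n, Measurable (η n)) (hη₀m : Measurable η₀)
    (hlow : ∃ c : ℝ, 1 < c ∧ ∀ᵐ x : RN N, c ≤ h x) (hbd : ∃ C : ℝ, ∀ᵐ x : RN N, h x ≤ C)
    (hmem : ∀ n, Integrable (fun x => ‖η n x‖ ^ h x) (volume : Measure (RN N)))
    (hae : ∀ᵐ x : RN N, Tendsto (fun n => η n x) atTop (nhds (η₀ x)))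
    (hsup : ∃ C : ℝ, ∀ n, luxNormV h (η n) ≤ C) :
    Tendsto (fun n => ∫ x,
        ‖(‖η n x‖ ^ (h x - 2)) • η n x - (‖η n x - η₀ x‖ ^ (h x - 2)) • (η n x - η₀ x)
          - (‖η₀ x‖ ^ (h x - 2)) • η₀ x‖ ^ (h x / (h x - 1)))
      atTop (nhds 0) := by
  classical
  obtain ⟨c, hc1, hcae⟩ := hlow
  obtain ⟨C₁, hC₁⟩ := hbd
  set C : ℝ := max C₁ c with hCdef
  have hcC : c ≤ C := le_max_right _ _
  have hC1 : 1 < C := lt_of_lt_of_le hc1 hcC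
  have hC0 : (0:ℝ) < C := by linarith
  have hhx : ∀ᵐ x : RN N, h x ∈ Set.Icc c C := by
    filter_upwards [hcae, hC₁] with x h1 h2
    exact ⟨h1, le_trans h2 (le_max_left _ _)⟩
  -- ## Step 1: uniform modular bound
  obtain ⟨C₀, hC₀⟩ := hsup
  set T : ℝ := max C₀ 0 + 1 with hTdef
  have hT1 : (1:ℝ) ≤ T := le_add_of_nonneg_left (le_max_right _ _)
  have hT0 : (0:ℝ) < T := lt_of_lt_of_le one_pos hT1
  set M : ℝ := max (T ^ C) 1 with hMdef
  have hM1 : (1:ℝ) ≤ M := le_max_right _ _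
  have hM0 : (0:ℝ) < M := lt_of_lt_of_le one_pos hM1
  have hIn : ∀ n, ∫ x, ‖η n x‖ ^ h x ≤ M := by
    intro n
    set I : ℝ := ∫ x, ‖η n x‖ ^ h x with hIdef
    have hI0 : 0 ≤ I := integral_nonneg (fun x => Real.rpow_nonneg (norm_nonneg _) _)
    -- the Luxemburg set is nonempty
    have hmem1 : (I + 1) ∈ {t : ℝ | 0 < t ∧ (∫ x, (‖η n x‖ / t) ^ h x) ≤ 1} := by
      refine ⟨by linarith, ?_⟩
      have ht1 : (1:ℝ) ≤ I + 1 := by linarith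
      have ht0 : (0:ℝ) < I + 1 := by linarith
      have hptw : ∀ᵐ x : RN N, (‖η n x‖ / (I + 1)) ^ h x ≤ ‖η n x‖ ^ h x * (I + 1)⁻¹ := by
        filter_upwards [hhx] with x hx
        rw [Real.div_rpow (norm_nonneg _) ht0.le]
        have h1 : I + 1 ≤ (I + 1) ^ h x := by
          calc I + 1 = (I + 1) ^ (1:ℝ) := (Real.rpow_one _).symm
            _ ≤ (I + 1) ^ h x := Real.rpow_le_rpow_of_exponent_le ht1 (by linarith [hx.1])
        rw [div_eq_mul_inv]
        apply mul_le_mul_of_nonneg_left _ (Real.rpow_nonneg (norm_nonneg _) _)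
        exact inv_anti₀ ht0 h1
      have hle : (∫ x, (‖η n x‖ / (I + 1)) ^ h x) ≤ ∫ x, ‖η n x‖ ^ h x * (I + 1)⁻¹ := by
        apply integral_mono_of_nonneg
        · exact Eventually.of_forall fun x => Real.rpow_nonneg (by positivity) _
        · exact (hmem n).mul_const _
        · exact hptw
      rw [integral_mul_const] at hle
      calc (∫ x, (‖η n x‖ / (I + 1)) ^ h x) ≤ I * (I + 1)⁻¹ := hle
        _ ≤ 1 := by rw [← div_eq_mul_inv]; exact div_le_one_of_le₀ (by linarith) ht0.le
    have hlux : luxNormV h (η n) < T := lt_of_le_of_lt (hC₀ n)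
      (by rw [hTdef]; linarith [le_max_left C₀ (0:ℝ)])
    rw [luxNormV] at hlux
    obtain ⟨t₀, ht₀mem, ht₀T⟩ := exists_lt_of_csInf_lt ⟨I + 1, hmem1⟩ hlux
    obtain ⟨ht₀pos, ht₀int⟩ := ht₀mem
    -- integrability of the scaled modular
    set Cg : ℝ := max ((t₀⁻¹) ^ C) 1 with hCgdef
    have hmeas_scaled : Measurable (fun x => (‖η n x‖ / t₀) ^ h x) :=
      ((hηm n).norm.div measurable_const).pow hhm
    have hint : Integrable (fun x => (‖η n x‖ / t₀) ^ h x) := by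
      apply Integrable.mono' ((hmem n).const_mul Cg) hmeas_scaled.aestronglyMeasurable
      filter_upwards [hhx] with x hx
      rw [Real.norm_eq_abs, abs_of_nonneg (Real.rpow_nonneg (by positivity) _)]
      rw [Real.div_rpow (norm_nonneg _) ht₀pos.le, div_eq_mul_inv, mul_comm]
      apply mul_le_mul_of_nonneg_right _ (Real.rpow_nonneg (norm_nonneg _) _)
      rw [← Real.inv_rpow ht₀pos.le]
      by_cases ht : t₀⁻¹ ≤ 1
      · exact le_trans (Real.rpow_le_one (by positivity) ht (by linarith [hx.1]))
          (le_max_right _ _)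
      · push_neg at ht
        exact le_trans (Real.rpow_le_rpow_of_exponent_le ht.le hx.2) (le_max_left _ _)
    have hptw2 : ∀ᵐ x : RN N, ‖η n x‖ ^ h x ≤ M * ((‖η n x‖ / t₀) ^ h x) := by
      filter_upwards [hhx] with x hx
      have heq : ‖η n x‖ ^ h x = (‖η n x‖ / t₀) ^ h x * t₀ ^ h x := by
        rw [Real.div_rpow (norm_nonneg _) ht₀pos.le,
          div_mul_cancel₀ _ (Real.rpow_pos_of_pos ht₀pos _).ne']
      rw [heq, mul_comm]
      apply mul_le_mul_of_nonneg_right _ (Real.rpow_nonneg (by positivity) _)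
      by_cases ht : t₀ ≤ 1
      · exact le_trans (Real.rpow_le_one ht₀pos.le ht (by linarith [hx.1])) hM1
      · push_neg at ht
        calc t₀ ^ h x ≤ t₀ ^ C := Real.rpow_le_rpow_of_exponent_le ht.le hx.2
          _ ≤ T ^ C := Real.rpow_le_rpow ht₀pos.le ht₀T.le hC0.le
          _ ≤ M := le_max_left _ _
    calc I ≤ ∫ x, M * ((‖η n x‖ / t₀) ^ h x) := by
          apply integral_mono_of_nonneg
          · exact Eventually.of_forall fun x => Real.rpow_nonneg (norm_nonneg _) _
          · exact hint.const_mul M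
          · exact hptw2
      _ = M * ∫ x, (‖η n x‖ / t₀) ^ h x := integral_const_mul M _
      _ ≤ M * 1 := mul_le_mul_of_nonneg_left ht₀int hM0.le
      _ = M := mul_one M
  -- ## Step 2: the limit function is in the modular space
  have hη₀meas : Measurable (fun x => ‖η₀ x‖ ^ h x) := hη₀m.norm.pow hhm
  have haeconv : ∀ᵐ x : RN N, Tendsto (fun n => ‖η n x‖ ^ h x) atTop (𝓝 (‖η₀ x‖ ^ h x)) := by
    filter_upwards [hae, hhx] with x hx hpx
    exact hx.norm.rpow_const (Or.inr (by linarith [hpx.1]))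
  have hfatou : ∫⁻ x, ENNReal.ofReal (‖η₀ x‖ ^ h x) ≤ ENNReal.ofReal M := by
    have hle : (∫⁻ x, ENNReal.ofReal (‖η₀ x‖ ^ h x))
        ≤ ∫⁻ x, liminf (fun n => ENNReal.ofReal (‖η n x‖ ^ h x)) atTop := by
      apply lintegral_mono_ae
      filter_upwards [haeconv] with x hx
      have h2 : Tendsto (fun n => ENNReal.ofReal (‖η n x‖ ^ h x)) atTop
          (𝓝 (ENNReal.ofReal (‖η₀ x‖ ^ h x))) :=
        (ENNReal.continuous_ofReal.tendsto _).comp hx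
      exact h2.liminf_eq.ge
    refine le_trans (le_trans hle
      (lintegral_liminf_le fun n => ((hηm n).norm.pow hhm).ennreal_ofReal)) ?_
    have hterm : ∀ n, (∫⁻ x, ENNReal.ofReal (‖η n x‖ ^ h x)) ≤ ENNReal.ofReal M := by
      intro n
      rw [← ofReal_integral_eq_lintegral_ofReal (hmem n)
        (Eventually.of_forall fun x => Real.rpow_nonneg (norm_nonneg _) _)]
      exact ENNReal.ofReal_le_ofReal (hIn n)
    calc liminf (fun n => ∫⁻ x, ENNReal.ofReal (‖η n x‖ ^ h x)) atTop
        ≤ liminf (fun _ : ℕ => ENNReal.ofReal M) atTop :=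
          liminf_le_liminf (Eventually.of_forall hterm)
      _ = ENNReal.ofReal M := liminf_const _
  have hη₀int : Integrable (fun x => ‖η₀ x‖ ^ h x) := by
    refine ⟨hη₀meas.aestronglyMeasurable, ?_⟩
    rw [hasFiniteIntegral_iff_ofReal
      (Eventually.of_forall fun x => Real.rpow_nonneg (norm_nonneg _) _)]
    exact lt_of_le_of_lt hfatou ENNReal.ofReal_lt_top
  have hIη₀ : ∫ x, ‖η₀ x‖ ^ h x ≤ M := by
    rw [← ENNReal.ofReal_le_ofReal_iff hM0.le,
      ofReal_integral_eq_lintegral_ofReal hη₀int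
      (Eventually.of_forall fun x => Real.rpow_nonneg (norm_nonneg _) _)]
    exact hfatou
  -- ## Step 3: uniform bound on the differences
  set W : ℕ → RN N → ℝ := fun n x => ‖η n x - η₀ x‖ ^ h x with hWdef
  have hWmeas : ∀ n, Measurable (W n) := fun n => ((hηm n).sub hη₀m).norm.pow hhm
  set M₂ : ℝ := 2 ^ C * (M + M) with hM₂def
  have htwoC : (0:ℝ) < 2 ^ C := Real.rpow_pos_of_pos two_pos _
  have hM₂0 : (0:ℝ) ≤ M₂ := by positivity
  have hWptw : ∀ n, ∀ᵐ x : RN N,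
      W n x ≤ 2 ^ C * (‖η n x‖ ^ h x + ‖η₀ x‖ ^ h x) := by
    intro n
    filter_upwards [hhx] with x hx
    set a := η n x
    set b := η₀ x
    have hp0 : (0:ℝ) ≤ h x := by linarith [hx.1]
    have h1 : ‖a - b‖ ^ h x ≤ (2 * max ‖a‖ ‖b‖) ^ h x := by
      apply Real.rpow_le_rpow (norm_nonneg _) _ hp0
      calc ‖a - b‖ ≤ ‖a‖ + ‖b‖ := norm_sub_le _ _
        _ ≤ max ‖a‖ ‖b‖ + max ‖a‖ ‖b‖ := add_le_add (le_max_left _ _) (le_max_right _ _)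
        _ = 2 * max ‖a‖ ‖b‖ := (two_mul _).symm
    have h2 : (2 * max ‖a‖ ‖b‖) ^ h x = 2 ^ h x * (max ‖a‖ ‖b‖) ^ h x :=
      Real.mul_rpow two_pos.le (le_max_of_le_left (norm_nonneg _))
    have h3 : (2:ℝ) ^ h x ≤ 2 ^ C := Real.rpow_le_rpow_of_exponent_le one_le_two hx.2
    have h4 : (max ‖a‖ ‖b‖) ^ h x ≤ ‖a‖ ^ h x + ‖b‖ ^ h x := by
      rcases max_choice ‖a‖ ‖b‖ with hmc | hmc <;> rw [hmc]
      · exact le_add_of_nonneg_right (Real.rpow_nonneg (norm_nonneg _) _)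
      · exact le_add_of_nonneg_left (Real.rpow_nonneg (norm_nonneg _) _)
    calc ‖a - b‖ ^ h x ≤ 2 ^ h x * (max ‖a‖ ‖b‖) ^ h x := by rw [← h2]; exact h1
      _ ≤ 2 ^ C * (‖a‖ ^ h x + ‖b‖ ^ h x) := by
          apply mul_le_mul h3 h4 (Real.rpow_nonneg (le_max_of_le_left (norm_nonneg _)) _)
            htwoC.le
  have hWint : ∀ n, Integrable (W n) := by
    intro n
    apply Integrable.mono' (((hmem n).add hη₀int).const_mul (2 ^ C))
      (hWmeas n).aestronglyMeasurable
    filter_upwards [hWptw n] with x hx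
    rwa [Real.norm_eq_abs, abs_of_nonneg (Real.rpow_nonneg (norm_nonneg _) _)]
  have hWle : ∀ n, ∫ x, W n x ≤ M₂ := by
    intro n
    calc (∫ x, W n x) ≤ ∫ x, 2 ^ C * (‖η n x‖ ^ h x + ‖η₀ x‖ ^ h x) := by
          apply integral_mono_of_nonneg
            (Eventually.of_forall fun x => Real.rpow_nonneg (norm_nonneg _) _)
            (((hmem n).add hη₀int).const_mul (2 ^ C)) (hWptw n)
      _ = 2 ^ C * ((∫ x, ‖η n x‖ ^ h x) + ∫ x, ‖η₀ x‖ ^ h x) := by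
          rw [integral_const_mul, integral_add (hmem n) hη₀int]
      _ ≤ 2 ^ C * (M + M) := by
          apply mul_le_mul_of_nonneg_left (add_le_add (hIn n) hIη₀) htwoC.le
  -- ## Step 4: the functions fₙ
  set f : ℕ → RN N → ℝ := fun n x =>
    ‖Phi (h x) (η n x) - Phi (h x) (η n x - η₀ x) - Phi (h x) (η₀ x)‖ ^ (h x / (h x - 1))
    with hfdef
  have hPm : ∀ (v : RN N → Rm m), Measurable v → Measurable (fun x => Phi (h x) (v x)) :=
    fun v hv => (hv.norm.pow (hhm.sub measurable_const)).smul hv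
  have hfmeas : ∀ n, Measurable (f n) := by
    intro n
    apply Measurable.pow _ (hhm.div (hhm.sub measurable_const))
    exact (((hPm _ (hηm n)).sub (hPm _ ((hηm n).sub hη₀m))).sub (hPm _ hη₀m)).norm
  have hf0 : ∀ n x, 0 ≤ f n x := fun n x => Real.rpow_nonneg (norm_nonneg _) _
  have hfae : ∀ᵐ x : RN N, Tendsto (fun n => f n x) atTop (𝓝 0) := by
    filter_upwards [hae, hhx] with x hx hpx
    have hp1 : 1 < h x := lt_of_lt_of_le hc1 hpx.1
    have h1 : Tendsto (fun n => Phi (h x) (η n x)) atTop (𝓝 (Phi (h x) (η₀ x))) := by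
      have hq : Tendsto (fun n => (η n x, h x)) atTop (𝓝 (η₀ x, h x)) :=
        hx.prodMk_nhds tendsto_const_nhds
      have h2 := ((contAt_Phi hp1 (η₀ x)).tendsto).comp hq
      exact h2
    have hx2 : Tendsto (fun n => η n x - η₀ x) atTop (𝓝 (0 : Rm m)) := by
      simpa using hx.sub (tendsto_const_nhds (x := η₀ x))
    have h2 : Tendsto (fun n => Phi (h x) (η n x - η₀ x)) atTop (𝓝 (Phi (h x) (0 : Rm m))) := by
      have hq : Tendsto (fun n => (η n x - η₀ x, h x)) atTop (𝓝 ((0 : Rm m), h x)) :=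
        hx2.prodMk_nhds tendsto_const_nhds
      have h3 := ((contAt_Phi hp1 0).tendsto).comp hq
      exact h3
    have hv : Tendsto (fun n =>
        Phi (h x) (η n x) - Phi (h x) (η n x - η₀ x) - Phi (h x) (η₀ x)) atTop (𝓝 0) := by
      have := (h1.sub h2).sub (tendsto_const_nhds (x := Phi (h x) (η₀ x)))
      simpa [Phi_zero] using this
    have hp' : (0:ℝ) < h x / (h x - 1) := div_pos (by linarith) (by linarith)
    have := hv.norm.rpow_const (Or.inr hp'.le)
    simpa [Real.zero_rpow hp'.ne'] using this
  have hWae : ∀ᵐ x : RN N, Tendsto (fun n => W n x) atTop (𝓝 0) := by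
    filter_upwards [hae, hhx] with x hx hpx
    have hx2 : Tendsto (fun n => ‖η n x - η₀ x‖) atTop (𝓝 0) := by
      have : Tendsto (fun n => η n x - η₀ x) atTop (𝓝 (0 : Rm m)) := by
        simpa using hx.sub (tendsto_const_nhds (x := η₀ x))
      simpa using this.norm
    have := hx2.rpow_const (Or.inr (by linarith [hpx.1] : (0:ℝ) ≤ h x))
    simpa [Real.zero_rpow (by linarith [hpx.1] : h x ≠ 0)] using this
  -- ## Step 5: the ε-argument
  rw [NormedAddCommGroup.tendsto_nhds_zero]
  intro ε' hε'
  set ε : ℝ := ε' / (2 * (M₂ + 1)) with hεdef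
  have hεpos : 0 < ε := by positivity
  obtain ⟨D, hD0, hkey⟩ := key_ineq (E := Rm m) hc1 hcC hεpos
  have hkeyae : ∀ n, ∀ᵐ x : RN N, f n x ≤ ε * W n x + D * ‖η₀ x‖ ^ h x := by
    intro n
    filter_upwards [hhx] with x hx
    have := hkey (η n x - η₀ x) (η₀ x) (h x) hx
    rwa [sub_add_cancel] at this
  set g : ℕ → RN N → ℝ := fun n x => max (f n x - ε * W n x) 0 with hgdef
  have hgmeas : ∀ n, Measurable (g n) :=
    fun n => ((hfmeas n).sub ((hWmeas n).const_mul ε)).max measurable_const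
  have hg0 : ∀ n x, 0 ≤ g n x := fun n x => le_max_right _ _
  have hgbd : ∀ n, ∀ᵐ x : RN N, ‖g n x‖ ≤ D * ‖η₀ x‖ ^ h x := by
    intro n
    filter_upwards [hkeyae n] with x hx
    rw [Real.norm_eq_abs, abs_of_nonneg (hg0 n x)]
    apply max_le (by linarith) (by positivity)
  have hgconv : ∀ᵐ x : RN N, Tendsto (fun n => g n x) atTop (𝓝 0) := by
    filter_upwards [hfae, hWae] with x hf hW
    have : Tendsto (fun n => f n x - ε * W n x) atTop (𝓝 0) := by
      have := hf.sub ((hW.const_mul ε))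
      simpa using this
    have := this.max (tendsto_const_nhds (x := (0:ℝ)))
    simpa using this
  have hgint : ∀ n, Integrable (g n) := by
    intro n
    exact Integrable.mono' (hη₀int.const_mul D) (hgmeas n).aestronglyMeasurable (hgbd n)
  have hDCT : Tendsto (fun n => ∫ x, g n x) atTop (𝓝 0) := by
    have := tendsto_integral_of_dominated_convergence (fun x => D * ‖η₀ x‖ ^ h x)
      (fun n => (hgmeas n).aestronglyMeasurable) (hη₀int.const_mul D) hgbd
      (by filter_upwards [hgconv] with x hx; exact hx)
    simpa using this
  have hfint : ∀ n, Integrable (f n) := by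
    intro n
    apply Integrable.mono' (((hWint n).const_mul ε).add (hη₀int.const_mul D))
      (hfmeas n).aestronglyMeasurable
    filter_upwards [hkeyae n] with x hx
    rwa [Real.norm_eq_abs, abs_of_nonneg (hf0 n x)]
  have hfle : ∀ n, (∫ x, f n x) ≤ (∫ x, g n x) + ε * M₂ := by
    intro n
    calc (∫ x, f n x) ≤ ∫ x, (g n x + ε * W n x) := by
          apply integral_mono_of_nonneg (Eventually.of_forall fun x => hf0 n x)
            ((hgint n).add ((hWint n).const_mul ε))
          apply Eventually.of_forall fun x => ?_
          have h5 : f n x - ε * W n x ≤ g n x := le_max_left _ _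
          show f n x ≤ g n x + ε * W n x
          linarith
      _ = (∫ x, g n x) + ε * ∫ x, W n x := by
          rw [integral_add (hgint n) ((hWint n).const_mul ε), integral_const_mul]
      _ ≤ (∫ x, g n x) + ε * M₂ := by
          have := mul_le_mul_of_nonneg_left (hWle n) hεpos.le
          linarith
  have hev : ∀ᶠ n in atTop, (∫ x, g n x) < ε' / 2 := hDCT.eventually_lt_const (by linarith)
  have hfinal : ∀ᶠ n in atTop, ‖∫ x, f n x‖ < ε' := by
    filter_upwards [hev] with n hn
    rw [Real.norm_eq_abs, abs_of_nonneg (integral_nonneg (hf0 n))]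
    have hεM₂ : ε * M₂ ≤ ε' / 2 := by
      rw [hεdef]
      rw [div_mul_eq_mul_div, div_le_div_iff₀ (by positivity) (by norm_num)]
      nlinarith
    calc (∫ x, f n x) ≤ (∫ x, g n x) + ε * M₂ := hfle n
      _ < ε' / 2 + ε' / 2 := by linarith
      _ = ε' := by ring
  exact hfinal
end
end
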